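/- In the algebra generated by A_{ij} (i,j = 1,…,4) with relations A_{ij} A_{kl} = η_{ki} η_{jl} A_{kl} A_{ij} (η the standard deformation matrix of phases with |μ|=1), the quantum determinant det(A_θ) = Σ_{σ∈S₄} (−1)^{|σ|} ε^{σ} A_{1,σ(1)} A_{2,σ(2)} A_{3,σ(3)} A_{4,σ(4)} is a central element of the algebra. -/

import Mathlib

open Complex
open scoped TensorProduct

noncomputable section

/-- The 4×4 deformation matrix of phases η = [[1,1,μ̄,μ],[1,1,μ,μ̄],[μ,μ̄,1,1],[μ̄,μ,1,1]]. -/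
def eta (μ : ℂ) : Fin 4 → Fin 4 → ℂ :=
  ![![1, 1, star μ, μ], ![1, 1, μ, star μ],
    ![μ, star μ, 1, 1], ![star μ, μ, 1, 1]]

/-- The twisting tensor ε: equal to 1 except ε^{1324} = μ and its cyclic permutations,
ε^{1423} = μ̄ and its cyclic permutations (written here with 0-based indices). -/
def eps (μ : ℂ) (i j k l : Fin 4) : ℂ :=
  if (i,j,k,l) = ((0:Fin 4),(2:Fin 4),(1:Fin 4),(3:Fin 4)) ∨ (i,j,k,l) = (2,1,3,0) ∨
     (i,j,k,l) = (1,3,0,2) ∨ (i,j,k,l) = (3,0,2,1) then μ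
  else if (i,j,k,l) = ((0:Fin 4),3,1,2) ∨ (i,j,k,l) = (3,1,2,0) ∨
     (i,j,k,l) = (1,2,0,3) ∨ (i,j,k,l) = (2,0,3,1) then star μ
  else 1

/-- The quantum determinant det(A_θ) = Σ_σ (−1)^{|σ|} ε^σ A_{1σ(1)}A_{2σ(2)}A_{3σ(3)}A_{4σ(4)}. -/
def qdet {R : Type*} [Ring R] [Algebra ℂ R] (μ : ℂ) (A : Fin 4 → Fin 4 → R) : R :=
  ∑ σ : Equiv.Perm (Fin 4),
    (((Equiv.Perm.sign σ : ℤ) : ℂ) * eps μ (σ 0) (σ 1) (σ 2) (σ 3)) •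
      (A 0 (σ 0) * A 1 (σ 1) * A 2 (σ 2) * A 3 (σ 3))

/-- The algebraic complement (quantum cofactor) Â_{il}: a signed sum over the permutations σ
of {1,…,4} with σ(i) = l, of the twisted products of the entries A_{k,σ(k)}, k ≠ i, taken in
increasing order of k, with prefactor ε^{σ₁…l…σ₄} η^{σ₁ l} ⋯ η^{σ_{i−1} l}.  (The sign of the
induced permutation of three letters is (−1)^{i+l} times the sign of σ.) -/
def cof {R : Type*} [Ring R] [Algebra ℂ R] (μ : ℂ) (A : Fin 4 → Fin 4 → R) (i l : Fin 4) : R :=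
  ∑ σ : Equiv.Perm (Fin 4),
    if σ i = l then
      (((-1 : ℂ)) ^ ((i : ℕ) + (l : ℕ)) * ((Equiv.Perm.sign σ : ℤ) : ℂ) *
        eps μ (σ 0) (σ 1) (σ 2) (σ 3) *
        (((List.finRange 4).filter (fun k => decide (k < i))).map
          (fun k => eta μ (σ k) l)).prod) •
      (((List.finRange 4).map (fun k => if k = i then (1 : R) else A k (σ k))).prod)
    else 0

lemma eta_row_prod (μ : ℂ) (h : μ * star μ = 1) (i : Fin 4) :
    eta μ i 0 * eta μ i 1 * eta μ i 2 * eta μ i 3 = 1 := by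
  rw [Complex.star_def] at h
  fin_cases i <;>
    simp [_root_.eta, Matrix.vecHead, Matrix.vecTail, Complex.star_def] <;>
    linear_combination h

lemma eta_col_prod (μ : ℂ) (h : μ * star μ = 1) (j : Fin 4) :
    eta μ 0 j * eta μ 1 j * eta μ 2 j * eta μ 3 j = 1 := by
  rw [Complex.star_def] at h
  fin_cases j <;>
    simp [_root_.eta, Matrix.vecHead, Matrix.vecTail, Complex.star_def] <;>
    linear_combination h

lemma key_comm {R : Type*} [Ring R] [Algebra ℂ R]
    (μ : ℂ) (h : μ * star μ = 1)
    (A : Fin 4 → Fin 4 → R)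
    (hA : ∀ i j k l, A i j * A k l = (eta μ k i * eta μ j l) • (A k l * A i j))
    (σ : Equiv.Perm (Fin 4)) (i j : Fin 4) :
    (A 0 (σ 0) * A 1 (σ 1) * A 2 (σ 2) * A 3 (σ 3)) * A i j
      = A i j * (A 0 (σ 0) * A 1 (σ 1) * A 2 (σ 2) * A 3 (σ 3)) := by
  have hcol : eta μ (σ 0) j * eta μ (σ 1) j * eta μ (σ 2) j * eta μ (σ 3) j = 1 := by
    have := Equiv.prod_comp σ (fun m => eta μ m j)
    rw [Fin.prod_univ_four, Fin.prod_univ_four] at this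
    rw [this]
    exact eta_col_prod μ h j
  have hrow := eta_row_prod μ h i
  calc (A 0 (σ 0) * A 1 (σ 1) * A 2 (σ 2) * A 3 (σ 3)) * A i j
      = (A 0 (σ 0) * A 1 (σ 1) * A 2 (σ 2)) * (A 3 (σ 3) * A i j) := by
        rw [mul_assoc]
    _ = (eta μ i 3 * eta μ (σ 3) j) • ((A 0 (σ 0) * A 1 (σ 1)) * (A 2 (σ 2) * A i j) * A 3 (σ 3)) := by
        rw [hA 3 (σ 3) i j, mul_smul_comm]
        congr 1
        rw [← mul_assoc, mul_assoc _ (A 2 (σ 2))]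
    _ = ((eta μ i 3 * eta μ (σ 3) j) * (eta μ i 2 * eta μ (σ 2) j)) •
          ((A 0 (σ 0) * (A 1 (σ 1) * A i j)) * A 2 (σ 2) * A 3 (σ 3)) := by
        rw [hA 2 (σ 2) i j, mul_smul_comm, smul_mul_assoc, smul_smul]
        congr 2
        rw [← mul_assoc, mul_assoc (A 0 (σ 0))]
    _ = ((eta μ i 3 * eta μ (σ 3) j) * (eta μ i 2 * eta μ (σ 2) j) * (eta μ i 1 * eta μ (σ 1) j)) •
          ((A 0 (σ 0) * A i j) * A 1 (σ 1) * A 2 (σ 2) * A 3 (σ 3)) := by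
        rw [hA 1 (σ 1) i j, mul_smul_comm, smul_mul_assoc, smul_mul_assoc, smul_smul]
        congr 2
        rw [← mul_assoc]
    _ = ((eta μ i 3 * eta μ (σ 3) j) * (eta μ i 2 * eta μ (σ 2) j) * (eta μ i 1 * eta μ (σ 1) j)
          * (eta μ i 0 * eta μ (σ 0) j)) •
          (A i j * A 0 (σ 0) * A 1 (σ 1) * A 2 (σ 2) * A 3 (σ 3)) := by
        rw [hA 0 (σ 0) i j, smul_mul_assoc, smul_mul_assoc, smul_mul_assoc, smul_smul]
    _ = (1 : ℂ) • (A i j * A 0 (σ 0) * A 1 (σ 1) * A 2 (σ 2) * A 3 (σ 3)) := by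
        congr 1
        calc (eta μ i 3 * eta μ (σ 3) j) * (eta μ i 2 * eta μ (σ 2) j) * (eta μ i 1 * eta μ (σ 1) j)
              * (eta μ i 0 * eta μ (σ 0) j)
            = (eta μ i 0 * eta μ i 1 * eta μ i 2 * eta μ i 3) *
              (eta μ (σ 0) j * eta μ (σ 1) j * eta μ (σ 2) j * eta μ (σ 3) j) := by ring
          _ = 1 := by rw [hrow, hcol, one_mul]
    _ = A i j * (A 0 (σ 0) * A 1 (σ 1) * A 2 (σ 2) * A 3 (σ 3)) := by
        rw [one_smul]; simp only [mul_assoc]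

/-- the quantum determinant is central in the algebra generated by the A_{ij}. -/
theorem stmt6 {R : Type*} [Ring R] [Algebra ℂ R]
    (μ : ℂ) (hμ : ‖μ‖ = 1)
    (A : Fin 4 → Fin 4 → R)
    (hA : ∀ i j k l, A i j * A k l = (eta μ k i * eta μ j l) • (A k l * A i j)) :
    ∀ x ∈ Algebra.adjoin ℂ {y : R | ∃ i j, y = A i j},
      qdet μ A * x = x * qdet μ A := by
  have h : μ * star μ = 1 := by
    have := Complex.mul_conj μ
    rw [Complex.normSq_eq_norm_sq, hμ] at this
    simpa using this
  have hgen : ∀ i j, qdet μ A * A i j = A i j * qdet μ A := by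
    intro i j
    rw [qdet, Finset.sum_mul, Finset.mul_sum]
    refine Finset.sum_congr rfl fun σ _ => ?_
    rw [smul_mul_assoc, mul_smul_comm, key_comm μ h A hA σ i j]
  intro x hx
  induction hx using Algebra.adjoin_induction with
  | mem y hy => obtain ⟨i, j, rfl⟩ := hy; exact hgen i j
  | algebraMap r => rw [Algebra.commutes]
  | add a b _ _ ha hb => rw [mul_add, add_mul, ha, hb]
  | mul a b _ _ ha hb => rw [← mul_assoc, ha, mul_assoc, hb, mul_assoc]
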